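/- Let h ∈ Matrix (Fin n) (Fin n) ℂ be Hermitian (h = hᴴ) with operator norm ‖h‖ ≤ 1, and let s denote the positive semidefinite square root of the positive semidefinite matrix 1 − h². Then u := h + Complex.I • s is unitary (u * uᴴ = 1 = uᴴ * u) and h = (u + uᴴ) / 2. -/

import Mathlib

open scoped Matrix Matrix.Norms.L2Operator ComplexOrder

/-- The positive semidefinite square root of a positive semidefinite matrix (the definition
`Matrix.PosSemidef.sqrt` of the older Mathlib, removed since). -/
noncomputable def Matrix.PosSemidef.sqrt {n : Type*} [Fintype n] [DecidableEq n] {𝕜 : Type*}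
    [RCLike 𝕜] {A : Matrix n n 𝕜} (hA : A.PosSemidef) : Matrix n n 𝕜 :=
  hA.1.eigenvectorUnitary.1 * Matrix.diagonal ((↑) ∘ (Real.sqrt ∘ hA.1.eigenvalues)) *
    (star hA.1.eigenvectorUnitary : Matrix n n 𝕜)

open scoped MatrixOrder in
theorem psd_sqrt_unique_aux (n : ℕ) (A B : Matrix (Fin n) (Fin n) ℂ) (hA : A.PosSemidef)
    (hB : B.PosSemidef) (hBA : B ^ 2 = A) : hA.sqrt = B := by
  have hA0 : 0 ≤ A := hA.nonneg
  have hB0 : 0 ≤ B := hB.nonneg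
  have e1 : hA.sqrt = cfc Real.sqrt A := by
    rw [hA.1.cfc_eq]
    simp [Matrix.PosSemidef.sqrt, Matrix.IsHermitian.cfc, Unitary.conjStarAlgAut_apply]
  rw [e1, ← cfcₙ_eq_cfc, ← CFC.sqrt_eq_real_sqrt A hA0]
  exact CFC.sqrt_unique (by rw [← sq, hBA]) hB0

/-- If `h` is a Hermitian complex matrix with `‖h‖ ≤ 1` (L²-operator norm) and `s` is the
positive semidefinite square root of `1 - h ^ 2`, then `u = h + I • s` is unitary and
`h = (u + uᴴ) / 2`. -/
theorem hermitian_contraction_real_part_of_unitary (n : ℕ)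
    (h : Matrix (Fin n) (Fin n) ℂ) (hherm : h.IsHermitian) (hnorm : ‖h‖ ≤ 1)
    (hpsd : (1 - h ^ 2).PosSemidef) :
    (h + Complex.I • hpsd.sqrt) * (h + Complex.I • hpsd.sqrt)ᴴ = 1 ∧
    (h + Complex.I • hpsd.sqrt)ᴴ * (h + Complex.I • hpsd.sqrt) = 1 ∧
    h = (2 : ℂ)⁻¹ • ((h + Complex.I • hpsd.sqrt) + (h + Complex.I • hpsd.sqrt)ᴴ) := by
  set U : Matrix (Fin n) (Fin n) ℂ := (hherm.eigenvectorUnitary : Matrix (Fin n) (Fin n) ℂ) with hUdef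
  set d : Fin n → ℝ := hherm.eigenvalues with hddef
  have hU1 : Uᴴ * U = 1 := by
    simpa [Matrix.star_eq_conjTranspose] using
      (Matrix.mem_unitaryGroup_iff'.mp hherm.eigenvectorUnitary.2)
  have hU1' : U * Uᴴ = 1 := by
    simpa [Matrix.star_eq_conjTranspose] using
      (Matrix.mem_unitaryGroup_iff.mp hherm.eigenvectorUnitary.2)
  -- eigenvalue bound
  have hdle : ∀ i, |d i| ≤ 1 := by
    intro i
    have hb := h.l2_opNorm_mulVec (hherm.eigenvectorBasis i)
    have hnb : ‖hherm.eigenvectorBasis i‖ = 1 := hherm.eigenvectorBasis.orthonormal.1 i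
    have e0 : (h *ᵥ (hherm.eigenvectorBasis i : EuclideanSpace ℂ (Fin n)) : Fin n → ℂ)
        = d i • ⇑(hherm.eigenvectorBasis i) := hherm.mulVec_eigenvectorBasis i
    rw [e0, show (EuclideanSpace.equiv (Fin n) ℂ).symm (d i • ⇑(hherm.eigenvectorBasis i))
        = d i • hherm.eigenvectorBasis i from rfl, norm_smul, Real.norm_eq_abs, hnb,
      mul_one, mul_one] at hb
    exact hb.trans hnorm
  have hdsq : ∀ i, (0:ℝ) ≤ 1 - d i ^ 2 := fun i => by
    nlinarith [hdle i, abs_nonneg (d i), sq_abs (d i)]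
  set r : Fin n → ℝ := fun i => Real.sqrt (1 - d i ^ 2) with hrdef
  set s' : Matrix (Fin n) (Fin n) ℂ :=
    U * Matrix.diagonal (fun i => (r i : ℂ)) * Uᴴ with hs'def
  have hspec : h = U * Matrix.diagonal (Complex.ofReal ∘ d) * Uᴴ := by
    simpa [Matrix.star_eq_conjTranspose] using hherm.spectral_theorem
  have key : ∀ c c' : Fin n → ℂ,
      (U * Matrix.diagonal c * Uᴴ) * (U * Matrix.diagonal c' * Uᴴ)
        = U * Matrix.diagonal (c * c') * Uᴴ := by
    intro c c'
    calc (U * Matrix.diagonal c * Uᴴ) * (U * Matrix.diagonal c' * Uᴴ)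
        = U * Matrix.diagonal c * (Uᴴ * U) * Matrix.diagonal c' * Uᴴ := by
          noncomm_ring
      _ = U * (Matrix.diagonal c * Matrix.diagonal c') * Uᴴ := by
          rw [hU1]; noncomm_ring
      _ = U * Matrix.diagonal (c * c') * Uᴴ := by rw [Matrix.diagonal_mul_diagonal]; rfl
  have hdiag : Matrix.diagonal ((fun i => (r i : ℂ)) * fun i => (r i : ℂ))
      = Matrix.diagonal (fun _ => (1:ℂ))
        - Matrix.diagonal ((Complex.ofReal ∘ d) * (Complex.ofReal ∘ d)) := by
    ext i j
    rcases eq_or_ne i j with rfl | hij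
    · simp only [Matrix.diagonal_apply_eq, Matrix.sub_apply, Pi.mul_apply,
        Function.comp_apply, hrdef]
      rw [← Complex.ofReal_mul, Real.mul_self_sqrt (hdsq i)]
      push_cast
      ring
    · simp [Matrix.diagonal_apply_ne _ hij, Matrix.one_apply_ne hij]
  have hh2 : h ^ 2 = U * Matrix.diagonal ((Complex.ofReal ∘ d) * (Complex.ofReal ∘ d)) * Uᴴ := by
    conv_lhs => rw [sq, hspec]
    rw [key]
  have hs'sq : s' ^ 2 = 1 - h ^ 2 := by
    rw [hs'def, sq, key, hdiag, Matrix.mul_sub, Matrix.sub_mul, hh2]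
    congr 1
    rw [show Matrix.diagonal (fun _ => (1:ℂ)) = 1 from Matrix.diagonal_one, mul_one, hU1']
  have hs'psd : s'.PosSemidef := by
    refine Matrix.PosSemidef.mul_mul_conjTranspose_same ?_ U
    refine Matrix.posSemidef_diagonal_iff.mpr fun i => ?_
    exact_mod_cast Complex.zero_le_real.mpr (Real.sqrt_nonneg _)
  have hsqrt : hpsd.sqrt = s' := psd_sqrt_unique_aux n _ s' hpsd hs'psd hs'sq
  have hcomm : h * s' = s' * h := by
    rw [hspec, hs'def, key, key, mul_comm]
  have hs'herm : s'ᴴ = s' := hs'psd.isHermitian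
  have hadj : (h + Complex.I • hpsd.sqrt)ᴴ = h - Complex.I • hpsd.sqrt := by
    rw [hsqrt, Matrix.conjTranspose_add, Matrix.conjTranspose_smul, hs'herm, hherm.eq]
    simp [Complex.star_def, Complex.conj_I, sub_eq_add_neg]
  have hmul1 : (h + Complex.I • s') * (h - Complex.I • s') = 1 := by
    have expand : (h + Complex.I • s') * (h - Complex.I • s')
        = h * h + Complex.I • (s' * h) - Complex.I • (h * s')
          - (Complex.I * Complex.I) • (s' * s') := by
      rw [Matrix.add_mul, Matrix.mul_sub, Matrix.mul_sub, Matrix.smul_mul, Matrix.mul_smul,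
        Matrix.smul_mul, Matrix.mul_smul, smul_smul]
      abel
    rw [expand, hcomm, Complex.I_mul_I, neg_smul, one_smul, ← sq, ← sq, hs'sq]
    abel
  have hmul2 : (h - Complex.I • s') * (h + Complex.I • s') = 1 := by
    have expand : (h - Complex.I • s') * (h + Complex.I • s')
        = h * h - Complex.I • (s' * h) + Complex.I • (h * s')
          - (Complex.I * Complex.I) • (s' * s') := by
      rw [Matrix.sub_mul, Matrix.mul_add, Matrix.mul_add, Matrix.smul_mul, Matrix.mul_smul,
        Matrix.smul_mul, Matrix.mul_smul, smul_smul]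
      abel
    rw [expand, hcomm, Complex.I_mul_I, neg_smul, one_smul, ← sq, ← sq, hs'sq]
    abel
  refine ⟨?_, ?_, ?_⟩
  · rw [hadj, hsqrt]; exact hmul1
  · rw [hadj, hsqrt]; exact hmul2
  · rw [hadj]
    have : h + Complex.I • hpsd.sqrt + (h - Complex.I • hpsd.sqrt) = (2:ℂ) • h := by
      rw [two_smul]; abel
    rw [this, smul_smul]
    norm_num
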